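/- Let E be a finite abelian group and b : E × E → ℂˣ a bicharacter (a map that is a group homomorphism in each variable) which is nondegenerate, i.e. for every x ≠ 1 in E there exists y ∈ E with b(x,y) ≠ 1. If L is a subgroup of E with b(x,y) = 1 for all x, y ∈ L, then |L|² ≤ |E|. -/

import Mathlib

/-- The number of monoid homs from a finite monoid into `ℂˣ` is at most the
cardinality of the monoid, by linear independence of characters. -/
lemma monoidHom_units_linearIndependent (G : Type*) [Monoid G] :
    LinearIndependent ℂ
      (fun f : (G →* ℂˣ) => ((Units.coeHom ℂ).comp f : G →* ℂ) : (G →* ℂˣ) → G → ℂ) := by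
  have hinj : Function.Injective
      (fun f : (G →* ℂˣ) => (Units.coeHom ℂ).comp f) := by
    intro f g h
    ext x
    have := congrArg (fun k : G →* ℂ => k x) h
    exact this
  exact (linearIndependent_monoidHom G ℂ).comp _ hinj

instance finite_monoidHom_units (G : Type*) [Monoid G] [Finite G] : Finite (G →* ℂˣ) := by
  have : Fintype G := Fintype.ofFinite G
  exact (monoidHom_units_linearIndependent G).finite

lemma card_monoidHom_units_le (G : Type*) [Monoid G] [Fintype G] :
    Nat.card (G →* ℂˣ) ≤ Nat.card G := by
  classical
  have hli := monoidHom_units_linearIndependent G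
  have : Finite (G →* ℂˣ) := hli.finite
  have : Fintype (G →* ℂˣ) := Fintype.ofFinite _
  have h1 : Fintype.card (G →* ℂˣ) ≤ Module.finrank ℂ (G → ℂ) :=
    hli.fintype_card_le_finrank
  have h2 : Module.finrank ℂ (G → ℂ) = Fintype.card G := by
    simp [Module.finrank_pi]
  rw [Nat.card_eq_fintype_card, Nat.card_eq_fintype_card]
  omega

/-- For a nondegenerate bicharacter `b` on a finite abelian group `E`, any
subgroup `L` on which `b` is identically `1` satisfies `|L|² ≤ |E|`. -/
theorem isotropic_card_sq_le
    {E : Type*} [CommGroup E] [Fintype E] (b : E → E → ℂˣ)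
    (hbl : ∀ x y z : E, b (x * y) z = b x z * b y z)
    (hbr : ∀ x y z : E, b x (y * z) = b x y * b x z)
    (hnd : ∀ x : E, x ≠ 1 → ∃ y : E, b x y ≠ 1)
    (L : Subgroup E) (hL : ∀ x ∈ L, ∀ y ∈ L, b x y = 1) :
    Nat.card L ^ 2 ≤ Nat.card E := by
  classical
  have hbone : ∀ x : E, b x 1 = 1 := by
    intro x
    have := hbr x 1 1
    rw [mul_one] at this
    exact (mul_eq_left.mp this.symm)
  have hboneL : ∀ y : E, b 1 y = 1 := by
    intro y
    have := hbl 1 1 y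
    rw [mul_one] at this
    exact (mul_eq_left.mp this.symm)
  -- the character of E attached to x ∈ L
  set g : L → (E →* ℂˣ) := fun x =>
    { toFun := b (x : E)
      map_one' := hbone x
      map_mul' := fun y z => hbr x y z } with hg
  -- descend to a character of E ⧸ L
  have hker : ∀ x : L, ∀ l ∈ L, g x l = 1 := fun x l hl => hL x x.2 l hl
  set f : L → (E ⧸ L →* ℂˣ) := fun x => QuotientGroup.lift L (g x) (hker x) with hf
  have hfinj : Function.Injective f := by
    intro x y hxy
    have hall : ∀ z : E, b (x : E) z = b (y : E) z := by
      intro z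
      have := congrArg (fun k : (E ⧸ L →* ℂˣ) => k (QuotientGroup.mk z)) hxy
      simpa [hf, hg] using this
    have hone : ∀ z : E, b ((x : E) * (y : E)⁻¹) z = 1 := by
      intro z
      have h1 : b ((x : E) * (y : E)⁻¹ * (y : E)) z
          = b ((x : E) * (y : E)⁻¹) z * b (y : E) z := hbl _ _ _
      rw [inv_mul_cancel_right, hall z] at h1
      exact mul_eq_right.mp h1.symm
    by_contra hne
    have hxyne : (x : E) * (y : E)⁻¹ ≠ 1 := by
      intro h
      exact hne (Subtype.ext (mul_inv_eq_one.mp h))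
    obtain ⟨z, hz⟩ := hnd _ hxyne
    exact hz (hone z)
  -- card bounds
  have h1 : Nat.card L ≤ Nat.card (E ⧸ L →* ℂˣ) := Nat.card_le_card_of_injective f hfinj
  have h2 : Nat.card (E ⧸ L →* ℂˣ) ≤ Nat.card (E ⧸ L) := card_monoidHom_units_le _
  have h3 : Nat.card L * Nat.card (E ⧸ L) = Nat.card E :=
    (Subgroup.card_eq_card_quotient_mul_card_subgroup L).symm ▸ (mul_comm _ _)
  calc Nat.card L ^ 2 = Nat.card L * Nat.card L := sq (Nat.card L) ▸ rfl
    _ ≤ Nat.card L * Nat.card (E ⧸ L) := Nat.mul_le_mul_left _ (h1.trans h2)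
    _ = Nat.card E := h3
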